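/- Let f be holomorphic in a neighborhood of 0 with power series f(z) = z + a·z^k + (higher order terms), where k ≥ 2 and a ∈ ℂ. Then for every n ∈ ℕ, the n-th iterate has power series f^[n](z) = z + n·a·z^k + (higher order terms); equivalently, the k-th iterated derivative satisfies iteratedDeriv k (f^[n]) 0 = n · k! · a, and iteratedDeriv j (f^[n]) 0 = 0 for 2 ≤ j < k, while deriv (f^[n]) 0 = 1. In particular, if a ≠ 0 then |iteratedDeriv k (f^[n]) 0| → ∞ as n → ∞. -/
import Mathlib

open Filter Asymptotics Topology Finset

private lemma stmt8_id_eq {g : ℂ → ℂ} {s : FormalMultilinearSeries ℂ ℂ ℂ}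
    (hs : HasFPowerSeriesAt g s 0) (n : ℕ) :
    iteratedDeriv n g 0 = (n.factorial : ℂ) * s.coeff n := by
  obtain ⟨r, hr⟩ := hs
  have h := hr.factorial_smul (y := (1 : ℂ)) n
  rw [iteratedDeriv_eq_iteratedFDeriv, ← h, s.apply_eq_pow_smul_coeff]
  simp [nsmul_eq_mul]

private lemma stmt8_normpow_o (j : ℕ) :
    (fun y : ℂ => ‖y‖ ^ (j + 1)) =o[𝓝 (0 : ℂ)] fun y => y ^ j := by
  have h := isLittleO_pow_pow (𝕜 := ℂ) (Nat.lt_succ_self j)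
  have h2 := isLittleO_norm_left.mpr h
  simpa [norm_pow] using h2

private lemma stmt8_pow_O {j k : ℕ} (h : j ≤ k) :
    (fun z : ℂ => z ^ k) =O[𝓝 (0 : ℂ)] fun z => z ^ j := by
  rcases eq_or_lt_of_le h with rfl | h
  · exact isBigO_refl _ _
  · exact (isLittleO_pow_pow h).isBigO

private lemma stmt8_const_eq_zero {j : ℕ} {b : ℂ}
    (h : (fun y : ℂ => y ^ j * b) =o[𝓝 (0 : ℂ)] fun y => y ^ j) : b = 0 := by
  have hm : (fun y : ℂ => y ^ j * b) =o[𝓝[≠] (0 : ℂ)] fun y => y ^ j :=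
    h.mono nhdsWithin_le_nhds
  have h' := hm.tendsto_div_nhds_zero
  have he : ∀ᶠ y in 𝓝[≠] (0 : ℂ), (fun y : ℂ => y ^ j * b / y ^ j) y = b := by
    filter_upwards [self_mem_nhdsWithin] with y hy
    have : y ^ j ≠ 0 := pow_ne_zero _ hy
    field_simp
  have ht : Tendsto (fun _ : ℂ => b) (𝓝[≠] (0 : ℂ)) (𝓝 0) := h'.congr' he
  exact tendsto_nhds_unique tendsto_const_nhds ht

private lemma stmt8_sumT {k : ℕ} (c : ℂ) {j : ℕ} (h2 : 2 ≤ j) (hjk : j ≤ k) (y : ℂ) :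
    ∑ i ∈ Finset.range j, y ^ i * (if i = 1 then (1 : ℂ) else if i = k then c else 0) = y := by
  rw [Finset.sum_eq_single_of_mem 1 (Finset.mem_range.mpr (by omega))]
  · simp
  · intro b hb hb1
    have hbk : b ≠ k := by have := Finset.mem_range.mp hb; omega
    simp [hb1, hbk]

/-- Coefficients determine the little-o expansion. -/
private lemma stmt8_forward {g : ℂ → ℂ} {s : FormalMultilinearSeries ℂ ℂ ℂ} {k : ℕ} {c : ℂ}
    (hs : HasFPowerSeriesAt g s 0) (hk : 2 ≤ k)
    (hc : ∀ j ≤ k, s.coeff j = if j = 1 then 1 else if j = k then c else 0) :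
    (fun z : ℂ => g z - (z + c * z ^ k)) =o[𝓝 (0 : ℂ)] fun z => z ^ k := by
  have hbig := hs.isBigO_sub_partialSum_pow (k + 1)
  have hps : ∀ y : ℂ, s.partialSum (k + 1) y = y + c * y ^ k := by
    intro y
    rw [FormalMultilinearSeries.partialSum]
    have : ∀ i, s i (fun _ => y) = y ^ i * s.coeff i := by
      intro i; rw [s.apply_eq_pow_smul_coeff, smul_eq_mul]
    simp only [this]
    rw [Finset.sum_range_succ]
    have hrest : ∑ i ∈ Finset.range k, y ^ i * s.coeff i = y := by
      rw [Finset.sum_congr rfl fun i hi => by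
        rw [hc i (le_of_lt (Finset.mem_range.mp hi))]]
      exact stmt8_sumT c hk le_rfl y
    rw [hrest, hc k le_rfl, if_neg (by omega : ¬ k = 1), if_pos rfl]
    ring
  have heq : (fun z : ℂ => g z - (z + c * z ^ k)) =
      fun y : ℂ => g (0 + y) - s.partialSum (k + 1) y := by
    funext y; rw [hps, zero_add]
  rw [heq]
  exact hbig.trans_isLittleO (stmt8_normpow_o k)

/-- Little-o expansion determines the coefficients. -/
private lemma stmt8_backward {g : ℂ → ℂ} {s : FormalMultilinearSeries ℂ ℂ ℂ} {k : ℕ} {c : ℂ}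
    (hs : HasFPowerSeriesAt g s 0) (hk : 2 ≤ k)
    (ho : (fun z : ℂ => g z - (z + c * z ^ k)) =o[𝓝 (0 : ℂ)] fun z => z ^ k) :
    ∀ j ≤ k, s.coeff j = if j = 1 then 1 else if j = k then c else 0 := by
  intro j
  induction j using Nat.strong_induction_on with
  | _ j IH =>
    intro hj
    set T : ℕ → ℂ := fun i => if i = 1 then 1 else if i = k then c else 0 with hT
    -- partial sum decomposition
    have hps : ∀ y : ℂ, s.partialSum (j + 1) y =
        (∑ i ∈ Finset.range j, y ^ i * T i) + y ^ j * s.coeff j := by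
      intro y
      rw [FormalMultilinearSeries.partialSum]
      have : ∀ i, s i (fun _ => y) = y ^ i * s.coeff i := by
        intro i; rw [s.apply_eq_pow_smul_coeff, smul_eq_mul]
      simp only [this]
      rw [Finset.sum_range_succ]
      congr 1
      exact Finset.sum_congr rfl fun i hi =>
        by rw [IH i (Finset.mem_range.mp hi) (le_of_lt (lt_of_lt_of_le (Finset.mem_range.mp hi) hj))]
    -- the remainder is little-o of y^j
    have hrem : (fun y : ℂ => y + c * y ^ k - (∑ i ∈ Finset.range j, y ^ i * T i) - T j * y ^ j)
        =o[𝓝 (0 : ℂ)] fun y => y ^ j := by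
      rcases Nat.lt_or_ge j 2 with h2 | h2
      · interval_cases j
        · -- j = 0
          have : (fun y : ℂ => y + c * y ^ k - (∑ i ∈ Finset.range 0, y ^ i * T i) - T 0 * y ^ 0)
              = fun y : ℂ => y + c * y ^ k := by
            funext y; simp [hT, show ¬(0:ℕ) = k by omega]
          rw [this]
          have ht0 : Tendsto (fun y : ℂ => y + c * y ^ k) (𝓝 0) (𝓝 0) := by
            have hco : ContinuousAt (fun y : ℂ => y + c * y ^ k) 0 :=
              (continuous_id.add (continuous_const.mul (continuous_pow k))).continuousAt
            simpa [ContinuousAt, zero_pow (show k ≠ 0 by omega)] using hco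
          have hoo := (isLittleO_one_iff (F := ℂ)).mpr ht0
          simpa using hoo
        · -- j = 1
          have : (fun y : ℂ => y + c * y ^ k - (∑ i ∈ Finset.range 1, y ^ i * T i) - T 1 * y ^ 1)
              = fun y : ℂ => c * y ^ k := by
            funext y
            simp [hT, show ¬(1:ℕ) = k by omega, show ¬(0:ℕ) = k by omega]
          rw [this]
          exact (isLittleO_pow_pow (by omega : 1 < k)).const_mul_left c |>.congr_left fun y => by ring
      · rcases eq_or_lt_of_le hj with heq | hjlt
        · -- j = k
          rw [heq]
          have : (fun y : ℂ => y + c * y ^ k - (∑ i ∈ Finset.range k, y ^ i * T i) - T k * y ^ k)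
              = fun _ : ℂ => 0 := by
            funext y
            rw [stmt8_sumT c hk le_rfl y]
            simp only [hT, if_neg (show ¬k = 1 by omega), eq_self_iff_true, if_true]; ring
          rw [this]
          exact isLittleO_zero _ _
        · -- 2 ≤ j < k
          have : (fun y : ℂ => y + c * y ^ k - (∑ i ∈ Finset.range j, y ^ i * T i) - T j * y ^ j)
              = fun y : ℂ => c * y ^ k := by
            funext y
            rw [stmt8_sumT c h2 hj y]
            simp only [hT, if_neg (show ¬j = 1 by omega), if_neg (show ¬j = k by omega)]; ring
          rw [this]
          exact (isLittleO_pow_pow hjlt).const_mul_left c |>.congr_left fun y => by ring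
    -- combine
    have hbig := hs.isBigO_sub_partialSum_pow (j + 1)
    have h3 : (fun y : ℂ => g (0 + y) - s.partialSum (j + 1) y) =o[𝓝 (0 : ℂ)] fun y => y ^ j :=
      hbig.trans_isLittleO (stmt8_normpow_o j)
    have h1 : (fun y : ℂ => g y - (y + c * y ^ k)) =o[𝓝 (0 : ℂ)] fun y => y ^ j :=
      ho.trans_isBigO (stmt8_pow_O hj)
    have hfinal : (fun y : ℂ => y ^ j * (s.coeff j - T j)) =o[𝓝 (0 : ℂ)] fun y => y ^ j := by
      have := (h1.add hrem).sub h3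
      refine this.congr_left fun y => ?_
      rw [hps, zero_add]
      ring
    have := stmt8_const_eq_zero hfinal
    have : s.coeff j = T j := by linear_combination this
    exact this

/-- If `f(z) = z + a·z^k + …` near `0` (with `k ≥ 2`), then
`f^[n](z) = z + n·a·z^k + …`; in particular if `a ≠ 0` the `k`-th iterated
derivative of `f^[n]` at `0` blows up as `n → ∞`. -/
theorem stmt_8 (f : ℂ → ℂ) (k : ℕ) (a : ℂ) (hk : 2 ≤ k)
    (hf : AnalyticAt ℂ f 0) (h0 : f 0 = 0) (h1 : deriv f 0 = 1)
    (hvanish : ∀ j : ℕ, 2 ≤ j → j < k → iteratedDeriv j f 0 = 0)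
    (hka : iteratedDeriv k f 0 = (k.factorial : ℂ) * a) :
    (∀ n : ℕ,
      iteratedDeriv k (f^[n]) 0 = (n : ℂ) * (k.factorial : ℂ) * a ∧
      (∀ j : ℕ, 2 ≤ j → j < k → iteratedDeriv j (f^[n]) 0 = 0) ∧
      deriv (f^[n]) 0 = 1) ∧
    (a ≠ 0 → Tendsto (fun n : ℕ => ‖iteratedDeriv k (f^[n]) 0‖) atTop atTop) := by
  obtain ⟨p, hp⟩ := hf
  have hpc : ∀ j ≤ k, p.coeff j = if j = 1 then 1 else if j = k then a else 0 := by
    intro j hj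
    have hd := stmt8_id_eq hp j
    rcases Nat.lt_or_ge j 2 with h2 | h2
    · interval_cases j
      · simp only [iteratedDeriv_zero, h0, Nat.factorial_zero, Nat.cast_one, one_mul] at hd
        simp [show ¬(0:ℕ) = 1 by omega, show ¬(0:ℕ) = k by omega, ← hd]
      · rw [iteratedDeriv_one, h1] at hd
        simp only [Nat.factorial_one, Nat.cast_one, one_mul] at hd
        simp [← hd]
    · rcases eq_or_lt_of_le hj with heq | hlt
      · rw [heq]; rw [heq] at hd
        rw [hka] at hd
        have hfac : (k.factorial : ℂ) ≠ 0 := Nat.cast_ne_zero.mpr k.factorial_ne_zero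
        have hca : p.coeff k = a := (mul_left_cancel₀ hfac hd).symm
        rw [if_neg (show ¬k = 1 by omega), if_pos rfl, hca]
      · rw [hvanish j h2 hlt] at hd
        have hfac : (j.factorial : ℂ) ≠ 0 := Nat.cast_ne_zero.mpr j.factorial_ne_zero
        have hc0 : p.coeff j = 0 := (mul_eq_zero.mp hd.symm).resolve_left hfac
        simp [show ¬j = 1 by omega, show ¬j = k by omega, hc0]
  have hof : (fun z : ℂ => f z - (z + a * z ^ k)) =o[𝓝 (0 : ℂ)] fun z => z ^ k :=
    stmt8_forward hp hk hpc
  have key : ∀ n : ℕ, f^[n] 0 = 0 ∧ AnalyticAt ℂ (f^[n]) 0 ∧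
      (fun z : ℂ => f^[n] z - (z + (n : ℂ) * a * z ^ k)) =o[𝓝 (0 : ℂ)] fun z => z ^ k := by
    intro n
    induction n with
    | zero =>
      refine ⟨rfl, by rw [Function.iterate_zero]; exact analyticAt_id, ?_⟩
      have e : (fun z : ℂ => f^[0] z - (z + ((0 : ℕ) : ℂ) * a * z ^ k)) = fun _ => 0 := by
        funext z; simp
      rw [e]; exact isLittleO_zero _ _
    | succ n IH =>
      obtain ⟨h0n, han, hon⟩ := IH
      have hut : Tendsto (f^[n]) (𝓝 0) (𝓝 0) := by
        have hc := han.continuousAt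
        rw [ContinuousAt, h0n] at hc; exact hc
      have hfa : AnalyticAt ℂ f (f^[n] 0) := by rw [h0n]; exact ⟨p, hp⟩
      refine ⟨?_, ?_, ?_⟩
      · rw [Function.iterate_succ_apply', h0n, h0]
      · rw [Function.iterate_succ']; exact hfa.comp han
      · set u := f^[n] with hu
        set c : ℂ := (n : ℂ) * a with hc
        have huO : (fun z : ℂ => u z) =O[𝓝 (0 : ℂ)] fun z => z := by
          have e : (fun z : ℂ => u z) = fun z => (u z - (z + c * z ^ k)) + (z + c * z ^ k) := by
            funext z; ring
          rw [e]
          have hb1 : (fun z : ℂ => u z - (z + c * z ^ k)) =O[𝓝 (0 : ℂ)] fun z => z :=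
            hon.isBigO.trans ((stmt8_pow_O (show 1 ≤ k by omega)).congr_right fun z => pow_one z)
          have hb2 : (fun z : ℂ => z + c * z ^ k) =O[𝓝 (0 : ℂ)] fun z : ℂ => z :=
            (isBigO_refl (fun z : ℂ => z) _).add
              (((stmt8_pow_O (show 1 ≤ k by omega)).const_mul_left c).congr_right
                fun z => pow_one z)
          exact hb1.add hb2
        have term1 : (fun z : ℂ => f (u z) - (u z + a * u z ^ k)) =o[𝓝 (0 : ℂ)]
            fun z => z ^ k :=
          (hof.comp_tendsto hut).trans_isBigO (huO.pow k)
        have husub : (fun z : ℂ => u z - z) =O[𝓝 (0 : ℂ)] fun z => z ^ k := by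
          have e : (fun z : ℂ => u z - z) = fun z => (u z - (z + c * z ^ k)) + c * z ^ k := by
            funext z; ring
          rw [e]
          exact hon.isBigO.add ((isBigO_refl _ _).const_mul_left c)
        have hsum : Tendsto (fun z : ℂ => ∑ i ∈ Finset.range k, u z ^ i * z ^ (k - 1 - i))
            (𝓝 0) (𝓝 0) := by
          have hlim : ∀ i ∈ Finset.range k,
              Tendsto (fun z : ℂ => u z ^ i * z ^ (k - 1 - i)) (𝓝 0) (𝓝 0) := by
            intro i hi
            have hprod := (hut.pow i).mul ((continuous_pow (k - 1 - i)).tendsto (0 : ℂ))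
            have hz : (0 : ℂ) ^ i * 0 ^ (k - 1 - i) = 0 := by
              rw [← pow_add]
              exact zero_pow (by have := Finset.mem_range.mp hi; omega)
            rwa [hz] at hprod
          have := tendsto_finset_sum (Finset.range k) hlim
          simpa using this
        have term3 : (fun z : ℂ => u z ^ k - z ^ k) =o[𝓝 (0 : ℂ)] fun z => z ^ k := by
          have hid : (fun z : ℂ => u z ^ k - z ^ k)
              = fun z => (∑ i ∈ Finset.range k, u z ^ i * z ^ (k - 1 - i)) * (u z - z) := by
            funext z; rw [geom_sum₂_mul]
          rw [hid]
          have hso : (fun z : ℂ => ∑ i ∈ Finset.range k, u z ^ i * z ^ (k - 1 - i))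
              =o[𝓝 (0 : ℂ)] (fun _ => (1 : ℂ)) := (isLittleO_one_iff (F := ℂ)).mpr hsum
          exact (hso.mul_isBigO husub).congr_right fun z => one_mul _
        have final := (term1.add hon).add (term3.const_mul_left a)
        refine final.congr_left fun z => ?_
        rw [Function.iterate_succ_apply', ← hu, hc]
        push_cast
        ring
  have main : ∀ n : ℕ,
      iteratedDeriv k (f^[n]) 0 = (n : ℂ) * (k.factorial : ℂ) * a ∧
      (∀ j : ℕ, 2 ≤ j → j < k → iteratedDeriv j (f^[n]) 0 = 0) ∧
      deriv (f^[n]) 0 = 1 := by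
    intro n
    obtain ⟨h0n, han, hon⟩ := key n
    obtain ⟨q, hq⟩ := han
    have hqc := stmt8_backward hq hk hon
    refine ⟨?_, ?_, ?_⟩
    · rw [stmt8_id_eq hq k, hqc k le_rfl, if_neg (show ¬k = 1 by omega), if_pos rfl]; ring
    · intro j hj2 hjk
      rw [stmt8_id_eq hq j, hqc j (le_of_lt hjk), if_neg (show ¬j = 1 by omega),
        if_neg (show ¬j = k by omega)]
      simp
    · have hd := stmt8_id_eq hq 1
      rw [iteratedDeriv_one] at hd
      rw [hd, hqc 1 (by omega), if_pos rfl]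
      simp
  refine ⟨main, ?_⟩
  intro ha
  have hnorm : ∀ n : ℕ, ‖iteratedDeriv k (f^[n]) 0‖ = (n : ℝ) * ((k.factorial : ℝ) * ‖a‖) := by
    intro n
    rw [(main n).1]
    simp [norm_mul, mul_assoc]
  refine Tendsto.congr (fun n => (hnorm n).symm) ?_
  exact Tendsto.atTop_mul_const
    (mul_pos (by exact_mod_cast k.factorial_pos) (norm_pos_iff.mpr ha))
    tendsto_natCast_atTop_atTop
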